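/- Let F ⊂ ℝ^d be the attractor of contracting similarities φ₁,…,φ_N satisfying the open set condition with Minkowski dimension strictly less than d. Then F possesses a compatible self-similar tiling (i.e., there is a feasible open set U for the OSC with ∂U ⊆ F) if and only if the complement of F is disconnected. -/

import Mathlib

open Metric Set Bornology Function MeasureTheory

noncomputable section

lemma sim_homeo {d : ℕ} {f : EuclideanSpace ℝ (Fin d) → EuclideanSpace ℝ (Fin d)} {c : ℝ}
    (hc : 0 < c) (hf : ∀ x y, dist (f x) (f y) = c * dist x y) :
    ∃ h : EuclideanSpace ℝ (Fin d) ≃ₜ EuclideanSpace ℝ (Fin d), ⇑h = f := by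
  set g : EuclideanSpace ℝ (Fin d) → EuclideanSpace ℝ (Fin d) := fun x => c⁻¹ • f x with hg
  have hgi : Isometry g := by
    apply Isometry.of_dist_eq
    intro x y
    rw [hg]
    simp only
    rw [dist_smul₀, hf, norm_inv, Real.norm_of_nonneg hc.le]
    field_simp
  set A := hgi.affineIsometryOfStrictConvexSpace with hA
  have hAg : ∀ x, A x = g x := fun x => rfl
  have hlin : Surjective A.linearIsometry.toLinearMap :=
    LinearMap.surjective_of_injective A.linearIsometry.injective
  have hgdec : ∀ x, g x = A.linearIsometry x + g 0 := by
    intro x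
    have h1 : g (x +ᵥ (0 : EuclideanSpace ℝ (Fin d))) = A.linearIsometry x +ᵥ g 0 := by
      rw [← hAg, ← hAg]; exact A.map_vadd 0 x
    simpa using h1
  have hfg : ∀ x, f x = c • g x := by
    intro x
    rw [hg]; simp only
    rw [smul_inv_smul₀ hc.ne']
  have hfs : Surjective f := by
    intro y
    obtain ⟨x, hx⟩ := hlin (c⁻¹ • y - g 0)
    refine ⟨x, ?_⟩
    rw [hfg, hgdec]
    rw [show A.linearIsometry x = c⁻¹ • y - g 0 from hx]
    simp [smul_smul, mul_inv_cancel₀ hc.ne']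
  have hfi : Injective f := by
    intro x y hxy
    have := hf x y
    rw [hxy, dist_self] at this
    have h0 : dist x y = 0 := by
      nlinarith [dist_nonneg (x := x) (y := y)]
    exact dist_eq_zero.1 h0
  set e := Equiv.ofBijective f ⟨hfi, hfs⟩ with he
  have hcf : Continuous f :=
    (LipschitzWith.of_dist_le_mul (K := c.toNNReal) (fun x y => by
      rw [hf, Real.coe_toNNReal _ hc.le])).continuous
  have hinv : Continuous e.symm := by
    refine (LipschitzWith.of_dist_le_mul (K := c⁻¹.toNNReal) (fun x y => ?_)).continuous
    have h2 : dist x y = c * dist (e.symm x) (e.symm y) := by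
      conv_lhs => rw [← e.apply_symm_apply x, ← e.apply_symm_apply y]
      exact hf _ _
    rw [Real.coe_toNNReal _ (inv_pos.2 hc).le]
    rw [h2]
    field_simp
    exact le_rfl
  exact ⟨⟨e, hcf, hinv⟩, rfl⟩


set_option maxHeartbeats 1000000 in
lemma attractor_interior_empty {d N : ℕ} (hd : 1 ≤ d)
    (φ : Fin N → EuclideanSpace ℝ (Fin d) → EuclideanSpace ℝ (Fin d))
    (r : Fin N → ℝ)
    (hφ : ∀ i, 0 < r i ∧ r i < 1 ∧ ∀ x y, dist (φ i x) (φ i y) = r i * dist x y)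
    (F : Set (EuclideanSpace ℝ (Fin d)))
    (hF : IsCompact F) (hattr : F = ⋃ i, φ i '' F)
    (hdim : ∑ i, r i ^ d < 1) : interior F = ∅ := by
  classical
  set e : EuclideanSpace ℝ (Fin d) → (Fin d → ℝ) := ⇑(WithLp.equiv 2 (Fin d → ℝ)) with he
  have hcard : (Fintype.card (Fin d) : ℝ) = (d : ℝ) := by simp
  have hpi : (μH[(d : ℝ)] : Measure (Fin d → ℝ)) = volume := by
    rw [← hcard]; exact hausdorffMeasure_pi_real
  have hel : LipschitzWith 1 e := PiLp.lipschitzWith_ofLp 2 (fun _ : Fin d => ℝ)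
  have heK : LipschitzWith _ ⇑(WithLp.equiv 2 (Fin d → ℝ)).symm :=
    (PiLp.antilipschitzWith_ofLp 2 (fun _ : Fin d => ℝ)).to_rightInverse
      (WithLp.equiv 2 (Fin d → ℝ)).right_inv
  have hFe : IsCompact (e '' F) := hF.image hel.continuous
  have hfin : μH[(d : ℝ)] F < ⊤ := by
    have h1 : F = (WithLp.equiv 2 (Fin d → ℝ)).symm '' (e '' F) := by
      rw [he, Set.image_image]; simp
    calc μH[(d : ℝ)] F = μH[(d : ℝ)] ((WithLp.equiv 2 (Fin d → ℝ)).symm '' (e '' F)) := by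
          rw [← h1]
      _ ≤ _ ^ (d : ℝ) * μH[(d : ℝ)] (e '' F) :=
          heK.hausdorffMeasure_image_le (by positivity) _
      _ < ⊤ := by
          rw [hpi]
          refine ENNReal.mul_lt_top ?_ hFe.measure_lt_top
          exact ENNReal.rpow_lt_top_of_nonneg (by positivity) ENNReal.coe_ne_top
  have hzero : μH[(d : ℝ)] F = 0 := by
    by_contra h0
    have hle : μH[(d : ℝ)] F ≤ (∑ i, ENNReal.ofReal (r i ^ d)) * μH[(d : ℝ)] F := by
      calc μH[(d : ℝ)] F = μH[(d : ℝ)] (⋃ i, φ i '' F) := by rw [← hattr]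
        _ ≤ ∑ i, μH[(d : ℝ)] (φ i '' F) := measure_iUnion_fintype_le _ _
        _ ≤ ∑ i, ENNReal.ofReal (r i ^ d) * μH[(d : ℝ)] F := by
            refine Finset.sum_le_sum fun i _ => ?_
            have hlip : LipschitzWith (r i).toNNReal (φ i) :=
              LipschitzWith.of_dist_le_mul (fun x y => by
                rw [(hφ i).2.2, Real.coe_toNNReal _ (hφ i).1.le])
            have h2 := hlip.hausdorffMeasure_image_le
              (by positivity : (0:ℝ) ≤ (d : ℝ)) F
            refine h2.trans (le_of_eq ?_)
            congr 1
            rw [ENNReal.rpow_natCast, ENNReal.ofReal_pow (hφ i).1.le]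
            rfl
        _ = _ := by rw [Finset.sum_mul]
    have hc1 : (∑ i, ENNReal.ofReal (r i ^ d)) < 1 := by
      rw [← ENNReal.ofReal_sum_of_nonneg (fun i _ => pow_nonneg (hφ i).1.le _), ← ENNReal.ofReal_one]
      rw [ENNReal.ofReal_lt_ofReal_iff one_pos]
      exact hdim
    have hlt : μH[(d : ℝ)] F < μH[(d : ℝ)] F := by
      calc μH[(d : ℝ)] F ≤ _ := hle
        _ < 1 * μH[(d : ℝ)] F := (ENNReal.mul_lt_mul_left h0 hfin.ne hc1)
        _ = _ := one_mul _
    exact absurd hlt (lt_irrefl _)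
  have hvol : volume F = 0 := by
    have hmp := (EuclideanSpace.volume_preserving_symm_measurableEquiv_toLp (Fin d)).symm
    have hFm : MeasurableSet F := hF.isClosed.measurableSet
    have h1 : volume F = volume ((MeasurableEquiv.toLp 2 (Fin d → ℝ)) ⁻¹' F) :=
      (hmp.measure_preimage hFm.nullMeasurableSet).symm
    have h2 : (MeasurableEquiv.toLp 2 (Fin d → ℝ)) ⁻¹' F = e '' F := by
      ext x
      constructor
      · intro hx; exact ⟨(WithLp.equiv 2 (Fin d → ℝ)).symm x, hx, rfl⟩
      · rintro ⟨y, hy, rfl⟩; exact hy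
    rw [h1, h2, ← hpi]
    have h3 := hel.hausdorffMeasure_image_le (by positivity : (0:ℝ) ≤ (d:ℝ)) F
    rw [hzero] at h3
    simpa using h3
  ext x
  simp only [mem_empty_iff_false, iff_false]
  intro hx
  have h1 : volume (interior F) ≤ volume F := measure_mono interior_subset
  have h2 : 0 < volume (interior F) := isOpen_interior.measure_pos volume ⟨x, hx⟩
  rw [hvol] at h1
  exact absurd (le_antisymm h1 zero_le) (ne_of_gt h2)


theorem stmt17 {d N : ℕ} (hd : 1 ≤ d) (hN : 2 ≤ N)
    (φ : Fin N → EuclideanSpace ℝ (Fin d) → EuclideanSpace ℝ (Fin d))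
    (r : Fin N → ℝ)
    (hφ : ∀ i, 0 < r i ∧ r i < 1 ∧
      ∀ x y, dist (φ i x) (φ i y) = r i * dist x y)
    (F : Set (EuclideanSpace ℝ (Fin d)))
    (hF : IsCompact F) (hFne : F.Nonempty) (hattr : F = ⋃ i, φ i '' F)
    (hdim : ∑ i, r i ^ d < 1)
    (O : Set (EuclideanSpace ℝ (Fin d)))
    (hOopen : IsOpen O) (hObdd : IsBounded O) (hOne : O.Nonempty)
    (hOfeas : (⋃ i, φ i '' O) ⊆ O)
    (hOdisj : Pairwise fun i j => Disjoint (φ i '' O) (φ j '' O))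
    (hSOSC : (O ∩ F).Nonempty) :
    (∃ U : Set (EuclideanSpace ℝ (Fin d)), U.Nonempty ∧ IsOpen U ∧
        IsBounded U ∧ (⋃ i, φ i '' U) ⊆ U ∧
        (Pairwise fun i j => Disjoint (φ i '' U) (φ j '' U)) ∧
        frontier U ⊆ F) ↔
      ¬ IsPreconnected Fᶜ := by
  have hint : interior F = ∅ := attractor_interior_empty hd φ r hφ F hF hattr hdim
  constructor
  · rintro ⟨U, hUne, hUopen, hUbdd, hUfeas, hUdisj, hUfr⟩ hpc
    -- a point of U outside F
    have h1 : (Fᶜ ∩ U).Nonempty := by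
      by_cases hUF : U ⊆ F
      · obtain ⟨x, hx⟩ := hUne
        have h2 : U ⊆ interior F := hUopen.subset_interior_iff.2 hUF
        rw [hint] at h2
        exact absurd (h2 hx) (Set.notMem_empty x)
      · obtain ⟨y, hyU, hyF⟩ := not_subset.1 hUF
        exact ⟨y, hyF, hyU⟩
    -- a point outside both F and closure U
    have h2 : (Fᶜ ∩ (closure U)ᶜ).Nonempty := by
      obtain ⟨R, hR0, hR⟩ := (hF.isBounded.union hUbdd.closure).subset_closedBall_lt 0 0
      have hz : ∃ z : EuclideanSpace ℝ (Fin d), R < ‖z‖ := by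
        refine ⟨EuclideanSpace.single ⟨0, hd⟩ (R + 1), ?_⟩
        rw [EuclideanSpace.norm_single]
        rw [Real.norm_of_nonneg (by linarith)]
        linarith
      obtain ⟨z, hzR⟩ := hz
      have hz' : z ∉ closedBall (0 : EuclideanSpace ℝ (Fin d)) R := by
        simp only [mem_closedBall, dist_zero_right, not_le]
        exact hzR
      exact ⟨z, fun hzF => hz' (hR (Or.inl hzF)), fun hzU => hz' (hR (Or.inr hzU))⟩
    have hcover : Fᶜ ⊆ U ∪ (closure U)ᶜ := by
      intro x hx
      by_contra hxx
      rw [Set.mem_union] at hxx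
      push_neg at hxx
      obtain ⟨hxU, hxc⟩ := hxx
      rw [Set.mem_compl_iff, not_not] at hxc
      have : x ∈ frontier U := by
        rw [frontier, hUopen.interior_eq]
        exact ⟨hxc, hxU⟩
      exact hx (hUfr this)
    obtain ⟨w, hwF, hwU, hwc⟩ := hpc U (closure U)ᶜ hUopen isClosed_closure.isOpen_compl
      hcover (h1.imp fun x hx => ⟨hx.1, hx.2⟩) (h2.imp fun x hx => ⟨hx.1, hx.2⟩)
    exact hwc (subset_closure hwU)
  · intro hpc
    classical
    obtain ⟨x₀, hx₀O, hx₀F⟩ := hSOSC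
    -- Step 1: a nonempty bounded open set G ⊆ Fᶜ, relatively clopen in Fᶜ
    have hG : ∃ G : Set (EuclideanSpace ℝ (Fin d)), G.Nonempty ∧ IsOpen G ∧ IsBounded G ∧
        G ⊆ Fᶜ ∧ closure G ∩ Fᶜ ⊆ G := by
      rcases Nat.lt_or_ge 1 d with hd2 | hd1
      · -- d ≥ 2 : use a separation of Fᶜ and connectivity of large spheres
        rw [IsPreconnected] at hpc
        push_neg at hpc
        obtain ⟨u, v, hu, hv, hcov, hau, hbv, hdisj⟩ := hpc
        have hcl : ∀ u' v' : Set (EuclideanSpace ℝ (Fin d)), IsOpen v' → Fᶜ ⊆ u' ∪ v' →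
            Fᶜ ∩ (u' ∩ v') = ∅ → closure (Fᶜ ∩ u') ∩ Fᶜ ⊆ Fᶜ ∩ u' := by
          rintro u' v' hv' hcov' hdisj' x ⟨hxc, hxF⟩
          rcases hcov' hxF with hxu | hxv
          · exact ⟨hxF, hxu⟩
          · exfalso
            obtain ⟨y, hyv, hyF, hyu⟩ := _root_.mem_closure_iff.1 hxc v' hv' hxv
            exact absurd (show y ∈ Fᶜ ∩ (u' ∩ v') from ⟨hyF, hyu, hyv⟩)
              (by rw [hdisj']; exact notMem_empty y)
        obtain ⟨R, hR0, hR⟩ := hF.isBounded.subset_closedBall_lt 0 0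
        set R' : ℝ := R + 1 with hR'
        have hR'pos : 0 < R' := by linarith
        have hrank : 1 < Module.rank ℝ (EuclideanSpace ℝ (Fin d)) := by
          have h1 : Module.finrank ℝ (EuclideanSpace ℝ (Fin d)) = d := finrank_euclideanSpace_fin
          rw [← Module.finrank_eq_rank, h1]
          exact_mod_cast hd2
        have hsphF : sphere (0 : EuclideanSpace ℝ (Fin d)) R' ⊆ Fᶜ := by
          intro x hx hxF
          have h1 : dist x 0 ≤ R := hR hxF
          have h2 : dist x 0 = R' := hx
          linarith
        have hconn : IsConnected (sphere (0 : EuclideanSpace ℝ (Fin d)) R') :=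
          isConnected_sphere hrank 0 hR'pos.le
        have hbd : ∀ u' v' : Set (EuclideanSpace ℝ (Fin d)), IsOpen u' → IsOpen v' →
            Fᶜ ⊆ u' ∪ v' → Fᶜ ∩ (u' ∩ v') = ∅ →
            sphere (0 : EuclideanSpace ℝ (Fin d)) R' ⊆ u' →
            Fᶜ ∩ v' ⊆ closedBall 0 R' := by
          rintro u' v' hu' hv' hcov' hdisj' hsph b ⟨hbF, hbv'⟩
          by_contra hb
          have hbn : R' < ‖b‖ := by
            simp only [mem_closedBall, dist_zero_right, not_le] at hb
            exact hb
          have hbpos : 0 < ‖b‖ := lt_trans hR'pos hbn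
          set T := (fun t : ℝ => t • b) '' Icc (R' / ‖b‖) 1 with hT
          have hTpre : IsPreconnected T :=
            isPreconnected_Icc.image _ (continuous_id.smul continuous_const).continuousOn
          have hTF : T ⊆ Fᶜ := by
            rintro _ ⟨t, ⟨ht1, ht2⟩, rfl⟩ hmem
            have hq : 0 < R' / ‖b‖ := by positivity
            have htpos : 0 ≤ t := le_trans hq.le ht1
            have h3 : R' ≤ ‖t • b‖ := by
              rw [norm_smul, Real.norm_of_nonneg htpos]
              calc R' = R' / ‖b‖ * ‖b‖ := by field_simp
                _ ≤ t * ‖b‖ := by gcongr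
            have h4 : dist (t • b) 0 ≤ R := hR hmem
            rw [dist_zero_right] at h4
            linarith
          have hbT : b ∈ T := ⟨1, ⟨(div_le_one hbpos).2 hbn.le, le_refl 1⟩, one_smul ℝ b⟩
          have hsT : (R' / ‖b‖) • b ∈ T :=
            ⟨R' / ‖b‖, ⟨le_refl _, (div_le_one hbpos).2 hbn.le⟩, rfl⟩
          have hsphere : (R' / ‖b‖) • b ∈ sphere (0 : EuclideanSpace ℝ (Fin d)) R' := by
            have hq : 0 < R' / ‖b‖ := by positivity
            simp only [mem_sphere_iff_norm, sub_zero, norm_smul,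
              Real.norm_of_nonneg hq.le]
            field_simp
          obtain ⟨y, hyT, hyu, hyv⟩ := hTpre u' v' hu' hv' (hTF.trans hcov')
            ⟨(R' / ‖b‖) • b, hsT, hsph hsphere⟩ ⟨b, hbT, hbv'⟩
          exact absurd (show y ∈ Fᶜ ∩ (u' ∩ v') from ⟨hTF hyT, hyu, hyv⟩)
            (by rw [hdisj']; exact notMem_empty y)
        have hcovv : Fᶜ ⊆ v ∪ u := by rw [Set.union_comm]; exact hcov
        have hdisjv : Fᶜ ∩ (v ∩ u) = ∅ := by rw [Set.inter_comm v u]; exact hdisj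
        have hcases : sphere (0 : EuclideanSpace ℝ (Fin d)) R' ⊆ u ∨
            sphere (0 : EuclideanSpace ℝ (Fin d)) R' ⊆ v := by
          by_contra hcon
          push_neg at hcon
          obtain ⟨hnu, hnv⟩ := hcon
          have h1 : (sphere (0 : EuclideanSpace ℝ (Fin d)) R' ∩ u).Nonempty := by
            obtain ⟨x, hx, hxv⟩ := not_subset.1 hnv
            rcases hcov (hsphF hx) with h | h
            · exact ⟨x, hx, h⟩
            · exact absurd h hxv
          have h2 : (sphere (0 : EuclideanSpace ℝ (Fin d)) R' ∩ v).Nonempty := by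
            obtain ⟨x, hx, hxu⟩ := not_subset.1 hnu
            rcases hcov (hsphF hx) with h | h
            · exact absurd h hxu
            · exact ⟨x, hx, h⟩
          obtain ⟨y, hy, hyu, hyv⟩ := hconn.isPreconnected u v hu hv (hsphF.trans hcov) h1 h2
          exact absurd (show y ∈ Fᶜ ∩ (u ∩ v) from ⟨hsphF hy, hyu, hyv⟩)
            (by rw [hdisj]; exact notMem_empty y)
        rcases hcases with hsphu | hsphv
        · exact ⟨Fᶜ ∩ v, hbv, hF.isClosed.isOpen_compl.inter hv,
            isBounded_closedBall.subset (hbd u v hu hv hcov hdisj hsphu),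
            fun x hx => hx.1, hcl v u hu hcovv hdisjv⟩
        · exact ⟨Fᶜ ∩ u, hau, hF.isClosed.isOpen_compl.inter hu,
            isBounded_closedBall.subset (hbd v u hv hu hcovv hdisjv hsphv),
            fun x hx => hx.1, hcl u v hv hcov hdisj⟩
      · -- d = 1 : find a bounded gap of F using the order structure of ℝ
        have hd1' : d = 1 := le_antisymm hd1 hd
        subst hd1'
        -- the isometric identification of EuclideanSpace ℝ (Fin 1) with ℝ
        set L : EuclideanSpace ℝ (Fin 1) → ℝ := fun x => x 0 with hL
        set L' : ℝ → EuclideanSpace ℝ (Fin 1) :=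
          fun t => (WithLp.equiv 2 (Fin 1 → ℝ)).symm (fun _ => t) with hL'
        have hLiso : ∀ x y, dist (L x) (L y) = dist x y := by
          intro x y
          rw [EuclideanSpace.dist_eq]
          rw [Fin.sum_univ_one]
          rw [Real.sqrt_sq_eq_abs, Real.dist_eq]
          exact (abs_abs _).symm
        have hLL' : ∀ t, L (L' t) = t := fun t => rfl
        have hL'L : ∀ x, L' (L x) = x := by
          intro x
          apply (WithLp.equiv 2 (Fin 1 → ℝ)).symm_apply_eq.2
          funext i
          have : i = 0 := Subsingleton.elim i 0
          rw [this]
          rfl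
        have hLisom : Isometry L := Isometry.of_dist_eq hLiso
        have hLinj : Injective L := fun x y hxy => by rw [← hL'L x, ← hL'L y, hxy]
        have hL'iso : Isometry L' := by
          apply Isometry.of_dist_eq
          intro s t
          calc dist (L' s) (L' t) = dist (L (L' s)) (L (L' t)) := (hLiso _ _).symm
            _ = dist s t := by rw [hLL', hLL']
        set LH : EuclideanSpace ℝ (Fin 1) ≃ₜ ℝ :=
          { toFun := L, invFun := L', left_inv := hL'L, right_inv := hLL',
            continuous_toFun := hLisom.continuous,
            continuous_invFun := hL'iso.continuous } with hLH
        set F₁ := L '' F with hF₁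
        have hF₁comp : IsCompact F₁ := hF.image hLisom.continuous
        have hF₁ne : F₁.Nonempty := hFne.image L
        have hF₁int : interior F₁ = ∅ := by
          have h1 : interior (L '' F) = L '' interior F := (LH.image_interior F).symm
          rw [hF₁, h1, hint, Set.image_empty]
        set i0 : Fin N := ⟨0, by omega⟩ with hi0
        set i1 : Fin N := ⟨1, by omega⟩ with hi1
        have hi01 : i0 ≠ i1 := by
          rw [hi0, hi1]
          exact Fin.ne_of_val_ne (by norm_num)
        have hp : φ i0 x₀ ∈ F := by
          rw [hattr]; exact mem_iUnion.2 ⟨i0, ⟨x₀, hx₀F, rfl⟩⟩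
        have hq : φ i1 x₀ ∈ F := by
          rw [hattr]; exact mem_iUnion.2 ⟨i1, ⟨x₀, hx₀F, rfl⟩⟩
        have hpq : φ i0 x₀ ≠ φ i1 x₀ := by
          intro h
          have h1 : φ i0 x₀ ∈ φ i0 '' O := ⟨x₀, hx₀O, rfl⟩
          have h2 : φ i0 x₀ ∈ φ i1 '' O := h ▸ ⟨x₀, hx₀O, rfl⟩
          exact Set.disjoint_left.1 (hOdisj hi01) h1 h2
        set a := sInf F₁ with ha
        set b := sSup F₁ with hb
        have haF : a ∈ F₁ := hF₁comp.sInf_mem hF₁ne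
        have hbF : b ∈ F₁ := hF₁comp.sSup_mem hF₁ne
        have hab : a < b := by
          have h1 : a ≤ L (φ i0 x₀) := csInf_le hF₁comp.bddBelow ⟨_, hp, rfl⟩
          have h2 : L (φ i0 x₀) ≤ b := le_csSup hF₁comp.bddAbove ⟨_, hp, rfl⟩
          have h3 : a ≤ L (φ i1 x₀) := csInf_le hF₁comp.bddBelow ⟨_, hq, rfl⟩
          have h4 : L (φ i1 x₀) ≤ b := le_csSup hF₁comp.bddAbove ⟨_, hq, rfl⟩
          have h5 : L (φ i0 x₀) ≠ L (φ i1 x₀) := fun h => hpq (hLinj h)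
          by_contra hcon
          push_neg at hcon
          have hp1 : L (φ i0 x₀) = a := le_antisymm (h2.trans hcon) h1
          have hq1 : L (φ i1 x₀) = a := le_antisymm (h4.trans hcon) h3
          exact h5 (hp1.trans hq1.symm)
        have hgap : ∃ w, w ∈ Ioo a b ∧ w ∉ F₁ := by
          by_contra hcon
          push_neg at hcon
          have h1 : Ioo a b ⊆ F₁ := fun w hw => hcon w hw
          have h2 : Ioo a b ⊆ interior F₁ := interior_maximal h1 isOpen_Ioo
          rw [hF₁int] at h2
          have hmem : (a + b) / 2 ∈ Ioo a b := ⟨by linarith, by linarith⟩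
          exact absurd (h2 hmem) (notMem_empty _)
        obtain ⟨w, hwIoo, hwF⟩ := hgap
        set C := connectedComponentIn F₁ᶜ w with hC
        have hCopen : IsOpen C := hF₁comp.isClosed.isOpen_compl.connectedComponentIn
        have hwC : w ∈ C := mem_connectedComponentIn hwF
        have hCsub : C ⊆ F₁ᶜ := connectedComponentIn_subset _ _
        have hCpre : IsPreconnected C := isPreconnected_connectedComponentIn
        have hCIcc : C ⊆ Icc a b := by
          intro x hx
          constructor
          · by_contra hxa
            push_neg at hxa
            have h1 : a ∈ Icc x w := ⟨hxa.le, hwIoo.1.le⟩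
            have h2 : Icc x w ⊆ C := hCpre.ordConnected.out hx hwC
            exact hCsub (h2 h1) haF
          · by_contra hxb
            push_neg at hxb
            have h1 : b ∈ Icc w x := ⟨hwIoo.2.le, hxb.le⟩
            have h2 : Icc w x ⊆ C := hCpre.ordConnected.out hwC hx
            exact hCsub (h2 h1) hbF
        have hCcl : closure C ∩ F₁ᶜ ⊆ C := by
          rintro x ⟨hxc, hxF⟩
          have hx2 : IsOpen (connectedComponentIn F₁ᶜ x) :=
            hF₁comp.isClosed.isOpen_compl.connectedComponentIn
          have hx3 : x ∈ connectedComponentIn F₁ᶜ x := mem_connectedComponentIn hxF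
          obtain ⟨y, hy1, hy2⟩ := _root_.mem_closure_iff.1 hxc _ hx2 hx3
          have h4 : connectedComponentIn F₁ᶜ x = connectedComponentIn F₁ᶜ y :=
            connectedComponentIn_eq hy1
          have h5 : C = connectedComponentIn F₁ᶜ y := connectedComponentIn_eq hy2
          rw [h5, ← h4]
          exact hx3
        refine ⟨L ⁻¹' C, ⟨L' w, ?_⟩, hCopen.preimage hLisom.continuous, ?_, ?_, ?_⟩
        · show L (L' w) ∈ C
          rw [hLL']
          exact hwC
        · have h1 : L ⁻¹' C ⊆ L' '' Icc a b := fun x hx => ⟨L x, hCIcc hx, hL'L x⟩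
          exact ((isCompact_Icc.image hL'iso.continuous).isBounded).subset h1
        · intro x hx hxF
          exact hCsub hx ⟨x, hxF, rfl⟩
        · rintro x ⟨hxc, hxF⟩
          have h1 : closure (L ⁻¹' C) = L ⁻¹' closure C := (LH.preimage_closure C).symm
          rw [h1] at hxc
          have h3 : L x ∉ F₁ := by
            rintro ⟨y, hyF, hyx⟩
            exact hxF (hLinj hyx ▸ hyF)
          exact hCcl ⟨hxc, h3⟩
    -- Step 2: blow the set G up into a feasible open set
    obtain ⟨G, hGne, hGopen, hGbdd, hGFc, hGcl⟩ := hG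
    set Φ : List (Fin N) → EuclideanSpace ℝ (Fin d) → EuclideanSpace ℝ (Fin d) :=
      fun σ => σ.foldr (fun i g => φ i ∘ g) id with hΦdef
    have hΦnil : Φ [] = id := rfl
    have hΦcons : ∀ (i : Fin N) σ, Φ (i :: σ) = φ i ∘ Φ σ := fun _ _ => rfl
    have hΦapp : ∀ σ τ : List (Fin N), ∀ x, Φ (σ ++ τ) x = Φ σ (Φ τ x) := by
      intro σ τ
      induction σ with
      | nil => intro x; rfl
      | cons i σ ih =>
        intro x
        rw [List.cons_append, hΦcons, hΦcons]
        simp only [Function.comp_apply]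
        rw [ih]
    have hφF : ∀ i, φ i '' F ⊆ F := by
      intro i
      conv_rhs => rw [hattr]
      exact subset_iUnion (fun j => φ j '' F) i
    have hφO : ∀ i, φ i '' O ⊆ O := fun i =>
      (subset_iUnion (fun j => φ j '' O) i).trans hOfeas
    have hΦF : ∀ σ, Φ σ '' F ⊆ F := by
      intro σ
      induction σ with
      | nil => rw [hΦnil, Set.image_id]
      | cons i σ ih =>
        rw [hΦcons, Set.image_comp]
        exact (Set.image_mono ih).trans (hφF i)
    have hΦO : ∀ σ, Φ σ '' O ⊆ O := by
      intro σ
      induction σ with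
      | nil => rw [hΦnil, Set.image_id]
      | cons i σ ih =>
        rw [hΦcons, Set.image_comp]
        exact (Set.image_mono ih).trans (hφO i)
    have hΦhom : ∀ σ, ∃ h : EuclideanSpace ℝ (Fin d) ≃ₜ EuclideanSpace ℝ (Fin d), ⇑h = Φ σ := by
      intro σ
      induction σ with
      | nil => exact ⟨Homeomorph.refl _, rfl⟩
      | cons i σ ih =>
        obtain ⟨h1, hh1⟩ := ih
        obtain ⟨h2, hh2⟩ := sim_homeo (hφ i).1 (hφ i).2.2
        refine ⟨h1.trans h2, ?_⟩
        rw [hΦcons]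
        funext x
        simp only [Homeomorph.trans_apply]
        rw [hh1, hh2]
        rfl
    have hNuniv : (Finset.univ : Finset (Fin N)).Nonempty := ⟨⟨0, by omega⟩, Finset.mem_univ _⟩
    set ρ : ℝ := Finset.univ.sup' hNuniv r with hρdef
    have hρi : ∀ i, r i ≤ ρ := fun i => Finset.le_sup' r (Finset.mem_univ i)
    have hρ0 : 0 < ρ := lt_of_lt_of_le (hφ ⟨0, by omega⟩).1 (hρi _)
    have hρ1 : ρ < 1 := by
      rw [hρdef, Finset.sup'_lt_iff]
      exact fun i _ => (hφ i).2.1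
    have hΦdist : ∀ σ x y, dist (Φ σ x) (Φ σ y) ≤ ρ ^ σ.length * dist x y := by
      intro σ
      induction σ with
      | nil => intro x y; simp [hΦnil]
      | cons i σ ih =>
        intro x y
        rw [hΦcons]
        calc dist ((φ i ∘ Φ σ) x) ((φ i ∘ Φ σ) y) = r i * dist (Φ σ x) (Φ σ y) := (hφ i).2.2 _ _
          _ ≤ ρ * (ρ ^ σ.length * dist x y) :=
              mul_le_mul (hρi i) (ih x y) dist_nonneg hρ0.le
          _ = ρ ^ (i :: σ).length * dist x y := by
              rw [List.length_cons]; ring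
    have haddr : ∀ n : ℕ, ∃ σ : List (Fin N), σ.length = n ∧ x₀ ∈ Φ σ '' F := by
      intro n
      induction n with
      | zero => exact ⟨[], rfl, ⟨x₀, hx₀F, rfl⟩⟩
      | succ n ih =>
        obtain ⟨σ, hlen, z, hzF, hzx⟩ := ih
        have hz2 : z ∈ ⋃ i, φ i '' F := by rw [← hattr]; exact hzF
        obtain ⟨i, w, hwF, hwz⟩ := mem_iUnion.1 hz2
        refine ⟨σ ++ [i], by simp [hlen], ⟨w, hwF, ?_⟩⟩
        rw [hΦapp σ [i] w, show Φ [i] w = φ i w from rfl, hwz, hzx]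
    obtain ⟨D, hD0, hDsub⟩ := (hGbdd.union hF.isBounded).subset_closedBall_lt 0 x₀
    have hD : ∀ y ∈ G, ∀ z ∈ F, dist y z ≤ 2 * D := by
      intro y hy z hz
      have h1 : dist y x₀ ≤ D := hDsub (Or.inl hy)
      have h2 : dist z x₀ ≤ D := hDsub (Or.inr hz)
      calc dist y z ≤ dist y x₀ + dist x₀ z := dist_triangle _ _ _
        _ ≤ 2 * D := by rw [dist_comm x₀ z]; linarith
    obtain ⟨ε, hε, hball⟩ := Metric.isOpen_iff.1 hOopen x₀ hx₀O
    obtain ⟨n₀, hn₀⟩ : ∃ n : ℕ, ρ ^ n * (2 * D) < ε := by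
      have h2D : (0:ℝ) < 2 * D := by linarith
      obtain ⟨n, hn⟩ := exists_pow_lt_of_lt_one (show 0 < ε / (2 * D) by positivity) hρ1
      exact ⟨n, (lt_div_iff₀ h2D).1 hn⟩
    obtain ⟨σ₀, hσ₀len, z₀, hz₀F, hz₀x⟩ := haddr n₀
    set G' : Set (EuclideanSpace ℝ (Fin d)) := Φ σ₀ '' G with hG'def
    obtain ⟨h₀, hh₀⟩ := hΦhom σ₀
    have hG'O : G' ⊆ O := by
      rintro _ ⟨y, hyG, rfl⟩
      apply hball
      rw [mem_ball]
      calc dist (Φ σ₀ y) x₀ = dist (Φ σ₀ y) (Φ σ₀ z₀) := by rw [hz₀x]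
        _ ≤ ρ ^ σ₀.length * dist y z₀ := hΦdist σ₀ y z₀
        _ ≤ ρ ^ n₀ * (2 * D) := by
            rw [hσ₀len]
            exact mul_le_mul_of_nonneg_left (hD y hyG z₀ hz₀F) (by positivity)
        _ < ε := hn₀
    have hG'open : IsOpen G' := by
      rw [hG'def, ← hh₀]
      exact h₀.isOpenMap _ hGopen
    have hG'ne : G'.Nonempty := hGne.image _
    have hG'bdd : IsBounded G' := hObdd.subset hG'O
    have hG'fr : closure G' \ G' ⊆ F := by
      have hc : closure G' = Φ σ₀ '' closure G := by
        rw [hG'def, ← hh₀]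
        exact (h₀.image_closure G).symm
      rw [hc, hG'def, ← hh₀, ← Set.image_diff h₀.injective]
      rintro _ ⟨y, hy, rfl⟩
      have hyF : y ∈ F := by
        by_contra hyF
        exact hy.2 (hGcl ⟨hy.1, hyF⟩)
      exact hΦF σ₀ ⟨y, hyF, (congrFun hh₀ y).symm⟩
    set U : Set (EuclideanSpace ℝ (Fin d)) := ⋃ σ : List (Fin N), Φ σ '' G' with hUdef
    have hUsubO : U ⊆ O := iUnion_subset fun σ => (Set.image_mono hG'O).trans (hΦO σ)
    have hUopen : IsOpen U := isOpen_iUnion fun σ => by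
      obtain ⟨h, hh⟩ := hΦhom σ
      rw [← hh]
      exact h.isOpenMap _ hG'open
    have hUne : U.Nonempty := by
      obtain ⟨g, hg⟩ := hG'ne
      exact ⟨g, mem_iUnion.2 ⟨[], ⟨g, hg, rfl⟩⟩⟩
    refine ⟨U, hUne, hUopen, hObdd.subset hUsubO, ?_, ?_, ?_⟩
    · refine iUnion_subset fun i => ?_
      rintro _ ⟨y, hyU, rfl⟩
      obtain ⟨σ, g, hg, rfl⟩ := mem_iUnion.1 hyU
      exact mem_iUnion.2 ⟨i :: σ, ⟨g, hg, rfl⟩⟩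
    · intro i j hij
      exact (hOdisj hij).mono (Set.image_mono hUsubO) (Set.image_mono hUsubO)
    · intro x hx
      rw [frontier, hUopen.interior_eq] at hx
      obtain ⟨hxc, hxU⟩ := hx
      by_contra hxF
      obtain ⟨f₀, hf₀⟩ := hFne
      obtain ⟨D₂, hD₂0, hD₂sub⟩ := (hObdd.closure.union hF.isBounded).subset_closedBall_lt 0 x₀
      have key : ∀ n : ℕ, Metric.infDist x F ≤ ρ ^ n * (2 * D₂) := by
        intro n
        set Vn := ⋃ σ ∈ {l : List (Fin N) | l.length < n}, Φ σ '' closure G' with hVndef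
        set Wn := ⋃ σ ∈ {l : List (Fin N) | l.length = n}, Φ σ '' closure O with hWndef
        have hUVW : U ⊆ Vn ∪ Wn := by
          refine iUnion_subset fun σ => ?_
          by_cases hlen : σ.length < n
          · intro z hz
            exact Or.inl (mem_biUnion hlen (Set.image_mono subset_closure hz))
          · intro z hz
            push_neg at hlen
            obtain ⟨g, hg, rfl⟩ := hz
            refine Or.inr (mem_biUnion (show (σ.take n).length = n by
              rw [List.length_take]; omega) ?_)
            refine ⟨Φ (σ.drop n) g, subset_closure (hΦO _ ⟨g, hG'O hg, rfl⟩), ?_⟩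
            rw [← hΦapp, List.take_append_drop]
        have hVncl : IsClosed Vn := by
          apply Set.Finite.isClosed_biUnion (List.finite_length_lt (Fin N) n)
          intro σ _
          obtain ⟨h, hh⟩ := hΦhom σ
          rw [← hh]
          exact ((hG'bdd.isCompact_closure).image h.continuous).isClosed
        have hWncl : IsClosed Wn := by
          apply Set.Finite.isClosed_biUnion (List.finite_length_eq (Fin N) n)
          intro σ _
          obtain ⟨h, hh⟩ := hΦhom σ
          rw [← hh]
          exact ((hObdd.isCompact_closure).image h.continuous).isClosed
        have hxVW : x ∈ Vn ∪ Wn := closure_minimal hUVW (hVncl.union hWncl) hxc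
        rcases hxVW with hxV | hxW
        · exfalso
          obtain ⟨σ, hσ, hxm⟩ := mem_iUnion₂.1 hxV
          have hsplit : closure G' = G' ∪ (closure G' \ G') :=
            (Set.union_diff_cancel subset_closure).symm
          rw [hsplit, Set.image_union] at hxm
          rcases hxm with h | h
          · exact hxU (mem_iUnion.2 ⟨σ, h⟩)
          · apply hxF
            obtain ⟨y, hy, rfl⟩ := h
            exact hΦF σ ⟨y, hG'fr hy, rfl⟩
        · obtain ⟨σ, hσ, y, hy, rfl⟩ := mem_iUnion₂.1 hxW
          have h1 : Φ σ f₀ ∈ F := hΦF σ ⟨f₀, hf₀, rfl⟩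
          have h2 : dist (Φ σ y) (Φ σ f₀) ≤ ρ ^ n * (2 * D₂) := by
            have h3 := hΦdist σ y f₀
            have hσn : σ.length = n := hσ
            rw [hσn] at h3
            refine h3.trans ?_
            have h4 : dist y f₀ ≤ 2 * D₂ := by
              have h5 : dist y x₀ ≤ D₂ := hD₂sub (Or.inl hy)
              have h6 : dist f₀ x₀ ≤ D₂ := hD₂sub (Or.inr hf₀)
              calc dist y f₀ ≤ dist y x₀ + dist x₀ f₀ := dist_triangle _ _ _
                _ ≤ 2 * D₂ := by rw [dist_comm x₀ f₀]; linarith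
            exact mul_le_mul_of_nonneg_left h4 (by positivity)
          exact (Metric.infDist_le_dist_of_mem h1).trans h2
      have hinf0 : Metric.infDist x F ≤ 0 := by
        by_contra hpos
        push_neg at hpos
        have h2D : (0:ℝ) < 2 * D₂ := by linarith
        obtain ⟨n, hn⟩ := exists_pow_lt_of_lt_one
          (show 0 < Metric.infDist x F / (2 * D₂) by positivity) hρ1
        have hkey := key n
        rw [lt_div_iff₀ h2D] at hn
        linarith
      apply hxF
      have h1 : Metric.infDist x F = 0 := le_antisymm hinf0 Metric.infDist_nonneg
      have h2 : x ∈ closure F := (Metric.mem_closure_iff_infDist_zero ⟨f₀, hf₀⟩).2 h1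
      rwa [hF.isClosed.closure_eq] at h2


end
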